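/- Let c(θ) = (cos θ, sin θ) and let ‖·‖_X be a norm on ℝ² with B_E ⊆ B_X ⊆ K·B_E for K ≥ 1. If |θ − φ| ≤ arccos(1/K), then ‖ c(θ)/‖c(θ)‖_X − c(φ)/‖c(φ)‖_X ‖_E ≤ K² · ‖c(θ) − c(φ)‖_E. -/

import Mathlib

open Set Real
open scoped RealInnerProductSpace

private lemma scalar_key' (K a b t sb st : ℝ) (hK : 1 ≤ K)
    (hb1 : b ≤ 1) (ht1 : t ≤ 1)
    (haK : 1 ≤ K * a) (hbK : 1 ≤ K * b)
    (hsb : 0 ≤ sb) (hst : 0 ≤ st)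
    (hsb2 : sb ^ 2 ≤ 1 - b ^ 2) (hst2 : st ^ 2 ≤ 1 - t ^ 2)
    (hab : a ≤ b) (hsupp : t * b - sb * st ≤ a) :
    a ^ 2 + b ^ 2 - 2 * t * a * b ≤ 2 * K ^ 4 * (1 - t) * a ^ 2 * b ^ 2 := by
  have hK0 : (0:ℝ) < K := lt_of_lt_of_le zero_lt_one hK
  have ha0 : 0 < a := by nlinarith
  have hb0 : 0 < b := by nlinarith
  have hd : 0 ≤ b - a := sub_nonneg.2 hab
  have ht : 0 ≤ 1 - t := by linarith
  have hb2 : 0 ≤ 1 - b ^ 2 := by nlinarith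
  have h1 : (b - a) ^ 2 ≤ (b - a) * (b * (1 - t) + sb * st) := by
    nlinarith [mul_nonneg hd (by linarith : (0:ℝ) ≤ b * (1 - t) + sb * st - (b - a))]
  have h3 : sb ^ 2 * st ^ 2 ≤ (1 - b ^ 2) * (1 - t ^ 2) :=
    mul_le_mul hsb2 hst2 (sq_nonneg st) hb2
  have h2 : 2 * ((b - a) * (sb * st)) ≤ (b - a) ^ 2 + (1 - b ^ 2) * (1 - t ^ 2) := by
    nlinarith [sq_nonneg (b - a - sb * st)]
  have h4 : (b - a) ^ 2 ≤ 2 * (b * (1 - t)) * (b - a) + (1 - b ^ 2) * (1 - t ^ 2) := by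
    nlinarith [h1, h2]
  have h5 : 2 * b * (b - a) + (1 - b ^ 2) * (1 + t) ≤ 2 * (K ^ 2 - 1) * (a * b) := by
    nlinarith [mul_nonneg (by linarith : (0:ℝ) ≤ K * a - 1) (by positivity : (0:ℝ) ≤ K * b),
      mul_nonneg hb2 ht]
  have h6 : (b - a) ^ 2 ≤ 2 * (K ^ 2 - 1) * (a * b) * (1 - t) := by
    have h5' := mul_le_mul_of_nonneg_right h5 ht
    linarith [h4, h5']
  have hKab : 1 ≤ K ^ 2 * (a * b) := by nlinarith [mul_le_mul haK hbK zero_le_one (by positivity : (0:ℝ) ≤ K * a)]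
  have H : (0:ℝ) ≤ (K ^ 2 * (a * b) - 1) * ((K ^ 2 * (a * b)) * (1 - t)) :=
    mul_nonneg (by linarith) (mul_nonneg (by positivity) ht)
  linarith [h6, H]

private lemma exists_dual_vec' (N : EuclideanSpace ℝ (Fin 2) → ℝ)
    (hN_add : ∀ v w, N (v + w) ≤ N v + N w)
    (hN_smul : ∀ (a : ℝ) (w : EuclideanSpace ℝ (Fin 2)), N (a • w) = |a| * N w)
    (hN_nonneg : ∀ w, 0 ≤ N w)
    (v : EuclideanSpace ℝ (Fin 2)) (hv : v ≠ 0) :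
    ∃ m : EuclideanSpace ℝ (Fin 2), (∀ w, ⟪m, w⟫ ≤ N w) ∧ ⟪m, v⟫ = N v := by
  set f : (EuclideanSpace ℝ (Fin 2)) →ₗ.[ℝ] ℝ := LinearPMap.mkSpanSingleton v (N v) hv with hf
  obtain ⟨g, hg1, hg2⟩ := exists_extension_of_le_sublinear f N
    (fun c hc x => by rw [hN_smul, abs_of_pos hc])
    hN_add
    (by
      rintro ⟨x, hx⟩
      obtain ⟨c, rfl⟩ := Submodule.mem_span_singleton.mp hx
      have happ : f ⟨c • v, hx⟩ = c • N v := LinearPMap.mkSpanSingleton'_apply _ _ _ c _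
      rw [happ, hN_smul]
      rcases le_or_gt 0 c with h | h
      · rw [abs_of_nonneg h]; exact le_refl _
      · rw [abs_of_neg h]
        have := hN_nonneg v
        simp only [smul_eq_mul]
        nlinarith)
  refine ⟨(InnerProductSpace.toDual ℝ (EuclideanSpace ℝ (Fin 2))).symm
    (LinearMap.toContinuousLinearMap g), fun w => ?_, ?_⟩
  · rw [InnerProductSpace.toDual_symm_apply]
    exact hg2 w
  · rw [InnerProductSpace.toDual_symm_apply]
    have hmem : v ∈ f.domain := by
      rw [hf]
      exact Submodule.mem_span_singleton_self v
    have := hg1 ⟨v, hmem⟩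
    simp only at this
    rw [show (LinearMap.toContinuousLinearMap g) v = g v from rfl, this]
    exact LinearPMap.mkSpanSingleton_apply ℝ ℝ hv (N v)

private lemma main_aux (N : EuclideanSpace ℝ (Fin 2) → ℝ)
    (hN_add : ∀ v w, N (v + w) ≤ N v + N w)
    (hN_smul : ∀ (a : ℝ) (w : EuclideanSpace ℝ (Fin 2)), N (a • w) = |a| * N w)
    (hNE : ∀ w, N w ≤ ‖w‖)
    (K : ℝ) (hK : 1 ≤ K) (hKE : ∀ w, ‖w‖ ≤ K * N w)
    (u v : EuclideanSpace ℝ (Fin 2)) (hu : ‖u‖ = 1) (hv : ‖v‖ = 1)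
    (hab : N u ≤ N v) :
    ‖(N u)⁻¹ • u - (N v)⁻¹ • v‖ ≤ K ^ 2 * ‖u - v‖ := by
  have hK0 : (0:ℝ) < K := lt_of_lt_of_le zero_lt_one hK
  have hN_nonneg : ∀ w, 0 ≤ N w := fun w => by
    have h := hKE w
    have := norm_nonneg w
    nlinarith
  have haK : 1 ≤ K * N u := by have := hKE u; rw [hu] at this; linarith
  have hbK : 1 ≤ K * N v := by have := hKE v; rw [hv] at this; linarith
  have ha1 : N u ≤ 1 := by have := hNE u; rw [hu] at this; linarith
  have hb1 : N v ≤ 1 := by have := hNE v; rw [hv] at this; linarith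
  have ha0 : 0 < N u := by nlinarith
  have hb0 : 0 < N v := by nlinarith
  have ht1 : ⟪u, v⟫ ≤ 1 := by
    have := real_inner_le_norm u v
    rw [hu, hv] at this; linarith
  have hvne : v ≠ 0 := fun h => by rw [h] at hv; simp at hv
  obtain ⟨m, hm1, hm2⟩ := exists_dual_vec' N hN_add hN_smul hN_nonneg v hvne
  have hmnorm : ‖m‖ ≤ 1 := by
    have h1 : ⟪m, m⟫ ≤ N m := hm1 m
    have h2 : N m ≤ ‖m‖ := hNE m
    have h3 : ⟪m, m⟫ = ‖m‖ ^ 2 := real_inner_self_eq_norm_sq m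
    nlinarith [norm_nonneg m]
  have hsb2 : ‖m - N v • v‖ ^ 2 ≤ 1 - (N v) ^ 2 := by
    have h := norm_sub_sq_real m (N v • v)
    rw [real_inner_smul_right, hm2, norm_smul, hv, Real.norm_eq_abs, abs_of_pos hb0] at h
    nlinarith [norm_nonneg m]
  have hst2 : ‖u - ⟪u, v⟫ • v‖ ^ 2 ≤ 1 - ⟪u, v⟫ ^ 2 := by
    have h := norm_sub_sq_real u (⟪u, v⟫ • v)
    rw [real_inner_smul_right, norm_smul, hu, hv, Real.norm_eq_abs] at h
    nlinarith [sq_abs ⟪u, v⟫]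
  have hsupp : ⟪u, v⟫ * N v - ‖m - N v • v‖ * ‖u - ⟪u, v⟫ • v‖ ≤ N u := by
    have hiu : ⟪m, u⟫ ≤ N u := hm1 u
    have hexp : ⟪m - N v • v, u - ⟪u, v⟫ • v⟫ = ⟪m, u⟫ - ⟪u, v⟫ * N v := by
      rw [inner_sub_left, inner_sub_right, inner_sub_right, real_inner_smul_right,
        real_inner_smul_left, real_inner_smul_left, real_inner_smul_right, hm2,
        real_inner_comm v u, real_inner_self_eq_norm_sq, hv]
      ring
    have habs := abs_real_inner_le_norm (m - N v • v) (u - ⟪u, v⟫ • v)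
    rw [hexp] at habs
    have h2 := neg_abs_le (⟪m, u⟫ - ⟪u, v⟫ * N v)
    linarith
  have key := scalar_key' K (N u) (N v) ⟪u, v⟫ ‖m - N v • v‖ ‖u - ⟪u, v⟫ • v‖ hK hb1 ht1
    haK hbK (norm_nonneg _) (norm_nonneg _) hsb2 hst2 hab hsupp
  have hXnorm : ‖N v • u - N u • v‖ ^ 2 = (N u) ^ 2 + (N v) ^ 2 - 2 * ⟪u, v⟫ * N u * N v := by
    rw [norm_sub_sq_real, real_inner_smul_left, real_inner_smul_right, norm_smul, norm_smul,
      hu, hv, Real.norm_eq_abs, Real.norm_eq_abs, abs_of_pos ha0, abs_of_pos hb0]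
    ring
  have hYnorm : ‖u - v‖ ^ 2 = 2 - 2 * ⟪u, v⟫ := by
    rw [norm_sub_sq_real, hu, hv]; ring
  have hXY : ‖N v • u - N u • v‖ ≤ K ^ 2 * ‖u - v‖ * (N u * N v) := by
    have h2 : ‖N v • u - N u • v‖ ^ 2 ≤ (K ^ 2 * ‖u - v‖ * (N u * N v)) ^ 2 := by
      rw [hXnorm]
      calc (N u) ^ 2 + (N v) ^ 2 - 2 * ⟪u, v⟫ * N u * N v
          ≤ 2 * K ^ 4 * (1 - ⟪u, v⟫) * (N u) ^ 2 * (N v) ^ 2 := key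
        _ = (K ^ 2 * ‖u - v‖ * (N u * N v)) ^ 2 := by
            rw [mul_pow, mul_pow, hYnorm]; ring
    nlinarith [norm_nonneg (N v • u - N u • v), norm_nonneg (u - v),
      mul_nonneg (mul_nonneg (sq_nonneg K) (norm_nonneg (u - v))) (mul_nonneg ha0.le hb0.le)]
  have hrw : (N u)⁻¹ • u - (N v)⁻¹ • v = (N u * N v)⁻¹ • (N v • u - N u • v) := by
    rw [smul_sub, smul_smul, smul_smul]
    have e1 : (N u * N v)⁻¹ * N v = (N u)⁻¹ := by field_simp; try ring
    have e2 : (N u * N v)⁻¹ * N u = (N v)⁻¹ := by field_simp; try ring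
    rw [e1, e2]
  rw [hrw, norm_smul, Real.norm_eq_abs, abs_of_pos (by positivity : (0:ℝ) < (N u * N v)⁻¹)]
  rw [inv_mul_le_iff₀ (by positivity : (0:ℝ) < N u * N v)]
  calc ‖N v • u - N u • v‖ ≤ K ^ 2 * ‖u - v‖ * (N u * N v) := hXY
    _ = N u * N v * (K ^ 2 * ‖u - v‖) := by ring

theorem stmt11 (N : EuclideanSpace ℝ (Fin 2) → ℝ)
    (hN_add : ∀ v w, N (v + w) ≤ N v + N w)
    (hN_smul : ∀ (a : ℝ) (w : EuclideanSpace ℝ (Fin 2)), N (a • w) = |a| * N w)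
    (hN_def : ∀ w, N w = 0 → w = 0)
    (hNE : ∀ w, N w ≤ ‖w‖)
    (K : ℝ) (hK : 1 ≤ K) (hKE : ∀ w, ‖w‖ ≤ K * N w)
    (c : ℝ → EuclideanSpace ℝ (Fin 2))
    (hc : ∀ θ, c θ = (WithLp.equiv 2 (Fin 2 → ℝ)).symm ![Real.cos θ, Real.sin θ])
    (θ φ : ℝ) (hθφ : |θ - φ| ≤ Real.arccos K⁻¹) :
    ‖(N (c θ))⁻¹ • c θ - (N (c φ))⁻¹ • c φ‖ ≤ K ^ 2 * ‖c θ - c φ‖ := by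
  have hnorm : ∀ α, ‖c α‖ = 1 := fun α => by
    rw [hc, EuclideanSpace.norm_eq]
    simp only [WithLp.equiv_symm_apply, WithLp.ofLp_toLp, Fin.sum_univ_two, Matrix.cons_val_zero,
      Matrix.cons_val_one, Matrix.head_cons, Real.norm_eq_abs, sq_abs]
    rw [Real.cos_sq_add_sin_sq]
    exact Real.sqrt_one
  rcases le_total (N (c θ)) (N (c φ)) with h | h
  · exact main_aux N hN_add hN_smul hNE K hK hKE (c θ) (c φ) (hnorm θ) (hnorm φ) h
  · have h2 := main_aux N hN_add hN_smul hNE K hK hKE (c φ) (c θ) (hnorm φ) (hnorm θ) h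
    rw [norm_sub_rev ((N (c φ))⁻¹ • c φ), norm_sub_rev (c φ)] at h2
    exact h2
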